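/- arXiv:1101.1019 — 2 statements merged into one kernel-verified Lean document; each statement's English description precedes it below -/
import Mathlib

section
/- Symmetric Ekeland principle III. In the abstract symmetrization framework, let X be a Banach space and let f, f_h : X → ℝ ∪ {+∞} (h ∈ ℕ) be proper, bounded below, lower semicontinuous functionals such that: (Γ1) for any u in dom(f) ∩ S there is a sequence (u_h) ⊂ S with u_h → u in X and f_h(u_h) → f(u); (Γ2) liminf_h (inf_X f_h) ≥ inf_X f; and f_h(u^H) ≤ f_h(u) for all u ∈ S, H ∈ ℋ* and h ∈ ℕ. Let Y be a nonempty subset of S and let ρ > 0, σ > 0 satisfy inf_Y f < inf_X f + σρ. Then for every h₀ ≥ 1 there exist h ≥ h₀, m > 1, u_h ∈ S and v_h ∈ X such that: (a) ‖v_h − v_h*‖_V < (K(C_Θ+1)+1)ρ; (b) |f_h(v_h) − inf_X f| < σρ; (c) dist(v_h, Y) < ρ + ‖T_{(m−1)ρ/m} u_h − u_h‖; (d) f_h(w) ≥ f_h(v_h) − σ‖w − v_h‖ for all w ∈ X. In particular, if f_h = f for all h ∈ ℕ and Y ⊆ X_{ℋ*}, there exists v ∈ X with ‖v − v*‖_V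 < (K(C_Θ+1)+1)ρ, |f(v) − inf_X f| < σρ, dist(v, Y) < ρ, and f(w) ≥ f(v) − σ‖w − v‖ for all w ∈ X. -/
open Filter Topology Metric Set

lemma ekeland_real {E : Type*} [MetricSpace E] [CompleteSpace E]
    (g : E → ℝ) (hlsc : LowerSemicontinuous g) (c : ℝ) (hb : ∀ x, c ≤ g x)
    (ε : ℝ) (hε : 0 < ε) (x₀ : E) :
    ∃ v, g v ≤ g x₀ ∧ ε * dist v x₀ ≤ g x₀ - g v ∧ ∀ w, g v - ε * dist w v ≤ g w := by
  classical
  set F : E → Set E := fun x => {y | g y + ε * dist x y ≤ g x} with hF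
  have hFx : ∀ x, x ∈ F x := by intro x; simp [hF]
  have hbdd : ∀ x, BddBelow (g '' F x) := by
    intro x
    refine ⟨c, ?_⟩
    rintro r ⟨z, _, rfl⟩
    exact hb z
  set I : E → ℝ := fun x => sInf (g '' F x) with hI
  have hIle : ∀ x, ∀ y ∈ F x, I x ≤ g y := by
    intro x y hy; exact csInf_le (hbdd x) ⟨y, hy, rfl⟩
  have hsel : ∀ n : ℕ, ∀ x : E, ∃ y, y ∈ F x ∧ g y < I x + (1/2)^n := by
    intro n x
    have h1 : I x < I x + (1/2)^n := lt_add_of_pos_right _ (by positivity)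
    obtain ⟨r, ⟨z, hz, rfl⟩, hr⟩ := exists_lt_of_csInf_lt ((Set.nonempty_of_mem (hFx x)).image g) h1
    exact ⟨z, hz, hr⟩
  choose next hnextF hnextI using hsel
  set u : ℕ → E := fun n => Nat.rec x₀ (fun n xn => next n xn) n with hu
  have hu0 : u 0 = x₀ := rfl
  have huS : ∀ n, u (n+1) = next n (u n) := fun n => rfl
  have hA : ∀ n, g (u (n+1)) + ε * dist (u n) (u (n+1)) ≤ g (u n) := by
    intro n; rw [huS n]; exact hnextF n (u n)
  have hB : ∀ n, g (u (n+1)) < I (u n) + (1/2)^n := by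
    intro n; rw [huS n]; exact hnextI n (u n)
  have hchain : ∀ n m, n ≤ m → g (u m) + ε * dist (u n) (u m) ≤ g (u n) := by
    intro n m hnm
    induction m, hnm using Nat.le_induction with
    | base => simp
    | succ m hnm ih =>
      have h1 := hA m
      have h2 := dist_triangle (u n) (u m) (u (m+1))
      nlinarith [(dist_nonneg : (0:ℝ) ≤ dist (u n) (u (m+1))), hε.le]
  have hanti : Antitone fun n => g (u n) := by
    refine antitone_nat_of_succ_le fun n => ?_
    have := hA n
    nlinarith [(dist_nonneg : (0:ℝ) ≤ dist (u n) (u (n+1)))]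
  have hbddb : BddBelow (Set.range fun n => g (u n)) := ⟨c, by rintro r ⟨n, rfl⟩; exact hb _⟩
  set L : ℝ := ⨅ n, g (u n) with hL
  have htendL : Tendsto (fun n => g (u n)) atTop (nhds L) :=
    tendsto_atTop_ciInf hanti hbddb
  have hLle : ∀ n, L ≤ g (u n) := fun n => ciInf_le hbddb n
  have hdistbd : ∀ n m, n ≤ m → dist (u n) (u m) ≤ (g (u n) - L) / ε := by
    intro n m hnm
    have h1 := hchain n m hnm
    have h2 := hLle m
    rw [le_div_iff₀ hε]
    nlinarith
  have hcauchy : CauchySeq u := by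
    refine cauchySeq_of_le_tendsto_0 (fun N => 2 * (g (u N) - L) / ε) ?_ ?_
    · intro n m N hn hm
      have h1 := hdistbd N n hn
      have h2 := hdistbd N m hm
      have := dist_triangle (u n) (u N) (u m)
      rw [dist_comm (u n) (u N)] at this
      calc dist (u n) (u m) ≤ dist (u N) (u n) + dist (u N) (u m) := by linarith
        _ ≤ (g (u N) - L) / ε + (g (u N) - L) / ε := by linarith
        _ = 2 * (g (u N) - L) / ε := by ring
    · have : Tendsto (fun N => 2 * (g (u N) - L) / ε) atTop (nhds (2 * (L - L) / ε)) := by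
        exact ((htendL.sub tendsto_const_nhds).const_mul 2).div_const ε
      simpa using this
  obtain ⟨v, hv⟩ := cauchySeq_tendsto_of_complete hcauchy
  have hgvL : g v ≤ L := by
    by_contra hcon
    push_neg at hcon
    set y := (L + g v) / 2 with hy
    have hy1 : L < y := by rw [hy]; linarith
    have hy2 : y < g v := by rw [hy]; linarith
    have he1 : ∀ᶠ n in atTop, y < g (u n) := hv.eventually (hlsc v y hy2)
    have he2 : ∀ᶠ n in atTop, g (u n) < y := htendL.eventually_lt_const hy1
    obtain ⟨n, h1, h2⟩ := (he1.and he2).exists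
    linarith
  have hvF : ∀ n, g v + ε * dist (u n) v ≤ g (u n) := by
    intro n
    have h1 : ε * dist (u n) v ≤ g (u n) - L := by
      have htd : Tendsto (fun m => dist (u n) (u m)) atTop (nhds (dist (u n) v)) :=
        (Continuous.dist continuous_const continuous_id).continuousAt.tendsto.comp hv
      have : ∀ᶠ m in atTop, ε * dist (u n) (u m) ≤ g (u n) - L := by
        filter_upwards [eventually_ge_atTop n] with m hm
        have := hchain n m hm
        have := hLle m
        linarith
      exact le_of_tendsto (htd.const_mul ε) this
    linarith
  refine ⟨v, ?_, ?_, ?_⟩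
  · calc g v ≤ L := hgvL
      _ ≤ g (u 0) := hLle 0
  · have := hvF 0
    rw [hu0] at this
    rw [dist_comm]
    linarith
  · intro w
    by_contra hcon
    push_neg at hcon
    have hwF : ∀ n, w ∈ F (u n) := by
      intro n
      have h1 := hvF n
      have h2 := dist_triangle (u n) v w
      simp only [hF, Set.mem_setOf_eq]
      have : dist v w = dist w v := dist_comm v w
      nlinarith [hε.le, (dist_nonneg : (0:ℝ) ≤ dist (u n) v)]
    have hge : ∀ n, I (u n) ≤ g w := fun n => hIle (u n) w (hwF n)
    have hgw : ∀ n, g (u (n+1)) - (1/2)^n ≤ g w := by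
      intro n; have := hB n; have := hge n; linarith
    have htend2 : Tendsto (fun n => g (u (n+1)) - (1/2:ℝ)^n) atTop (nhds (L - 0)) := by
      exact ((htendL.comp (tendsto_add_atTop_nat 1)).sub
        (tendsto_pow_atTop_nhds_zero_of_lt_one (by norm_num) (by norm_num)))
    have hLw : L ≤ g w := by
      have := le_of_tendsto htend2 (Filter.Eventually.of_forall hgw)
      simpa using this
    nlinarith [(dist_nonneg : (0:ℝ) ≤ dist w v), hε.le, hgvL]

lemma ekeland_ereal {E : Type*} [MetricSpace E] [CompleteSpace E]
    (f : E → EReal) (hlsc : LowerSemicontinuous f) (c : ℝ) (hb : ∀ x, (c:EReal) ≤ f x)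
    (ε δ : ℝ) (hε : 0 < ε) (x₀ : E) (hx₀top : f x₀ ≠ ⊤)
    (hx₀ : f x₀ < (⨅ x, f x) + ((ε*δ:ℝ):EReal)) :
    ∃ v, f v ≤ f x₀ ∧ dist v x₀ < δ ∧ ∀ w, f v - ((ε * dist w v : ℝ):EReal) ≤ f w := by
  classical
  have hbot : ∀ x, f x ≠ ⊥ := fun x => ne_of_gt (lt_of_lt_of_le (EReal.bot_lt_coe c) (hb x))
  set M : ℝ := (f x₀).toReal + 1 with hM
  have hfx₀ : f x₀ = ((f x₀).toReal : EReal) := (EReal.coe_toReal hx₀top (hbot x₀)).symm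
  have hminbot : ∀ x, min (f x) (M:EReal) ≠ ⊥ := by
    intro x
    have : ((min c M : ℝ):EReal) ≤ min (f x) (M:EReal) := by
      refine le_min ?_ ?_
      · exact le_trans (by exact_mod_cast min_le_left c M) (hb x)
      · exact_mod_cast min_le_right c M
    exact ne_of_gt (lt_of_lt_of_le (EReal.bot_lt_coe _) this)
  have hmintop : ∀ x, min (f x) (M:EReal) ≠ ⊤ :=
    fun x => ne_top_of_le_ne_top (EReal.coe_ne_top M) (min_le_right _ _)
  set g : E → ℝ := fun x => (min (f x) (M:EReal)).toReal with hg
  have hcoe_g : ∀ x, (g x : EReal) = min (f x) (M:EReal) :=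
    fun x => EReal.coe_toReal (hmintop x) (hminbot x)
  have hglsc : LowerSemicontinuous g := by
    intro x y hy
    have hcy : (y:EReal) < min (f x) (M:EReal) := by
      rw [← hcoe_g x]; exact_mod_cast hy
    have hyf : (y:EReal) < f x := lt_of_lt_of_le hcy (min_le_left _ _)
    have hyM : (y:EReal) < (M:EReal) := lt_of_lt_of_le hcy (min_le_right _ _)
    filter_upwards [hlsc x y hyf] with z hz
    have : (y:EReal) < min (f z) (M:EReal) := lt_min hz hyM
    rw [← hcoe_g z] at this
    exact_mod_cast this
  have hgb : ∀ x, min c M ≤ g x := by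
    intro x
    have h1 : ((min c M : ℝ):EReal) ≤ (g x : EReal) := by
      rw [hcoe_g x]
      refine le_min ?_ ?_
      · exact le_trans (by exact_mod_cast min_le_left c M) (hb x)
      · exact_mod_cast min_le_right c M
    exact_mod_cast h1
  have hfx₀M : f x₀ ≤ (M:EReal) := by
    rw [hfx₀]; exact_mod_cast le_of_lt (lt_add_one _)
  have hgx₀ : (g x₀ : EReal) = f x₀ := by rw [hcoe_g x₀, min_eq_left hfx₀M]
  obtain ⟨v, hv1, hv2, hv3⟩ := ekeland_real g hglsc (min c M) hgb ε hε x₀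
  -- f v = g v
  have hfvM : f v ≤ (M:EReal) := by
    by_contra hcon
    push_neg at hcon
    have : g v = M := by
      have := hcoe_g v
      rw [min_eq_right (le_of_lt hcon)] at this
      exact_mod_cast this
    have hgx₀R : g x₀ = (f x₀).toReal := by
      have := hgx₀
      rw [hfx₀] at this
      exact_mod_cast this
    rw [this, hgx₀R] at hv1
    simp only [hM] at hv1
    linarith [hv1]
  have hgv : (g v : EReal) = f v := by rw [hcoe_g v, min_eq_left hfvM]
  -- L finite
  set L : EReal := ⨅ x, f x with hL
  have hLb : (c:EReal) ≤ L := le_iInf hb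
  have hLt : L ≠ ⊤ := ne_top_of_le_ne_top hx₀top (iInf_le f x₀)
  have hLbot' : L ≠ ⊥ := ne_of_gt (lt_of_lt_of_le (EReal.bot_lt_coe c) hLb)
  set ℓ : ℝ := L.toReal with hℓ
  have hLcoe : L = (ℓ:EReal) := (EReal.coe_toReal hLt hLbot').symm
  have hℓv : ℓ ≤ g v := by
    have : (ℓ:EReal) ≤ (g v:EReal) := by rw [← hLcoe, hgv]; exact iInf_le f v
    exact_mod_cast this
  have hgx₀lt : g x₀ < ℓ + ε*δ := by
    have : (g x₀ : EReal) < ((ℓ + ε*δ : ℝ):EReal) := by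
      rw [hgx₀, EReal.coe_add, ← hLcoe]; exact hx₀
    exact_mod_cast this
  refine ⟨v, ?_, ?_, ?_⟩
  · rw [← hgv, ← hgx₀]; exact_mod_cast hv1
  · have : ε * dist v x₀ < ε * δ := by linarith
    exact lt_of_mul_lt_mul_left (by linarith) hε.le
  · intro w
    by_cases hw : f w ≤ (M:EReal)
    · have hgw : (g w : EReal) = f w := by rw [hcoe_g w, min_eq_left hw]
      have := hv3 w
      calc f v - ((ε * dist w v : ℝ):EReal) = ((g v - ε * dist w v : ℝ):EReal) := by
            rw [← hgv, ← EReal.coe_sub]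
        _ ≤ (g w : EReal) := by exact_mod_cast this
        _ = f w := hgw
    · push_neg at hw
      have h1 : f v - ((ε * dist w v : ℝ):EReal) = ((g v - ε * dist w v : ℝ):EReal) := by
        rw [← hgv, ← EReal.coe_sub]
      have h2 : g v - ε * dist w v ≤ M := by
        have hgvM : g v ≤ M := by
          have : (g v:EReal) ≤ (M:EReal) := by rw [hgv]; exact hfvM
          exact_mod_cast this
        nlinarith [dist_nonneg (x := w) (y := v), hε.le]
      calc f v - ((ε * dist w v : ℝ):EReal) = ((g v - ε * dist w v : ℝ):EReal) := h1
        _ ≤ (M:EReal) := by exact_mod_cast h2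
        _ ≤ f w := le_of_lt hw

set_option maxHeartbeats 1000000 in


theorem symmetric_ekeland_III
    {X : Type*} [NormedAddCommGroup X] [NormedSpace ℝ X] [CompleteSpace X]
    {V : Type*} [NormedAddCommGroup V] [NormedSpace ℝ V] [CompleteSpace V]
    {W : Type*} [NormedAddCommGroup W] [NormedSpace ℝ W] [CompleteSpace W]
    (ι : X →L[ℝ] V) (κ : V →L[ℝ] W)
    (K : ℝ) (hK : 0 < K) (hιK : ∀ u : X, ‖ι u‖ ≤ K * ‖u‖)
    (S : Set X)
    {P : Type*} [TopologicalSpace P] [PathConnectedSpace P]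
    (pol : X → P → X) (sy : X → X)
    (hpolS : ∀ u ∈ S, ∀ H : P, pol u H ∈ S)
    (hsyS : ∀ u : X, sy u ∈ S)
    (hpolCont : ContinuousOn (fun q : X × P => pol q.1 q.2) (S ×ˢ Set.univ))
    (hsypol : ∀ u ∈ S, ∀ H : P,
      pol (sy u) H = sy u ∧ sy (pol u H) = sy u ∧ pol (pol u H) H = pol u H)
    (happrox : ∃ Hs : ℕ → P, ∀ u ∈ S,
      Filter.Tendsto (fun m => ι (List.foldl pol u ((List.range m).map Hs)))
        Filter.atTop (nhds (ι (sy u))))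
    (hpolContr : ∀ u ∈ S, ∀ v ∈ S, ∀ H : P, ‖ι (pol u H) - ι (pol v H)‖ ≤ ‖ι u - ι v‖)
    (Θ : X → X) (CΘ : ℝ) (hCΘ : 0 < CΘ)
    (hΘS : ∀ u : X, Θ u ∈ S) (hΘid : ∀ u ∈ S, Θ u = u)
    (hΘlip : ∀ u v : X, ‖ι (Θ u) - ι (Θ v)‖ ≤ CΘ * ‖ι u - ι v‖)
    (hpolext : ∀ u : X, ∀ H : P, pol u H = pol (Θ u) H)
    (hsyext : ∀ u : X, sy u = sy (Θ u))
    (T : ℝ → X → X)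
    (hTS : ∀ ρ > (0:ℝ), ∀ u ∈ S, T ρ u ∈ S)
    (hTpol : ∀ ρ > (0:ℝ), ∀ u ∈ S, ∃ l : List P, T ρ u = List.foldl pol u l)
    (hTsy : ∀ ρ > (0:ℝ), ∀ u ∈ S, sy (T ρ u) = sy u)
    (hTapprox : ∀ ρ > (0:ℝ), ∀ u ∈ S, ‖ι (T ρ u) - ι (sy u)‖ < ρ)
    (f : X → EReal) (fs : ℕ → X → EReal)
    (hfproper : ∃ u, f u ≠ ⊤)
    (hfbdd : ∃ c : ℝ, ∀ u, (c : EReal) ≤ f u)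
    (hflsc : LowerSemicontinuous f)
    (hfsproper : ∀ h : ℕ, ∃ u, fs h u ≠ ⊤)
    (hfsbdd : ∀ h : ℕ, ∃ c : ℝ, ∀ u, (c : EReal) ≤ fs h u)
    (hfslsc : ∀ h : ℕ, LowerSemicontinuous (fs h))
    (hGamma1 : ∀ u ∈ S, f u ≠ ⊤ → ∃ us : ℕ → X, (∀ h, us h ∈ S) ∧
      Filter.Tendsto us Filter.atTop (nhds u) ∧
      Filter.Tendsto (fun h => fs h (us h)) Filter.atTop (nhds (f u)))
    (hGamma2 : (⨅ w, f w) ≤ Filter.liminf (fun h => ⨅ w, fs h w) Filter.atTop)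
    (hfspol : ∀ h : ℕ, ∀ u ∈ S, ∀ H : P, fs h (pol u H) ≤ fs h u)
    (Y : Set X) (hYne : Y.Nonempty) (hYS : Y ⊆ S)
    (ρ σ : ℝ) (hρ : 0 < ρ) (hσ : 0 < σ)
    (hYinf : (⨅ y : Y, f y) < (⨅ w, f w) + ((σ * ρ : ℝ) : EReal)) :
    (∀ h₀ : ℕ, 1 ≤ h₀ → ∃ h ≥ h₀, ∃ m : ℝ, 1 < m ∧ ∃ uh ∈ S, ∃ vh : X,
      ‖ι vh - ι (sy vh)‖ < (K * (CΘ + 1) + 1) * ρ ∧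
      ((⨅ w, f w) - ((σ * ρ : ℝ) : EReal) < fs h vh ∧
        fs h vh < (⨅ w, f w) + ((σ * ρ : ℝ) : EReal)) ∧
      Metric.infDist vh Y < ρ + ‖T ((m - 1) * ρ / m) uh - uh‖ ∧
      (∀ w : X, fs h vh - ((σ * ‖w - vh‖ : ℝ) : EReal) ≤ fs h w)) ∧
    ((∀ h : ℕ, fs h = f) → (∀ y ∈ Y, ∀ H : P, pol y H = y) →
      ∃ v : X,
        ‖ι v - ι (sy v)‖ < (K * (CΘ + 1) + 1) * ρ ∧
        ((⨅ w, f w) - ((σ * ρ : ℝ) : EReal) < f v ∧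
          f v < (⨅ w, f w) + ((σ * ρ : ℝ) : EReal)) ∧
        Metric.infDist v Y < ρ ∧
        (∀ w : X, f v - ((σ * ‖w - v‖ : ℝ) : EReal) ≤ f w)) := by
    classical
  -- foldl lemmas
  have hfoldS : ∀ l : List P, ∀ u ∈ S, List.foldl pol u l ∈ S := by
    intro l
    induction l with
    | nil => intro u hu; simpa using hu
    | cons H t ih => intro u hu; simpa using ih (pol u H) (hpolS u hu H)
  have hfoldle : ∀ h : ℕ, ∀ l : List P, ∀ u ∈ S, fs h (List.foldl pol u l) ≤ fs h u := by
    intro h l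
    induction l with
    | nil => intro u _; simp
    | cons H t ih =>
      intro u hu
      calc fs h (List.foldl pol (pol u H) t) ≤ fs h (pol u H) := ih _ (hpolS u hu H)
        _ ≤ fs h u := hfspol h u hu H
  obtain ⟨Hs, hHs⟩ := happrox
  have hfoldContr : ∀ l : List P, ∀ u ∈ S, ∀ v ∈ S,
      ‖ι (List.foldl pol u l) - ι (List.foldl pol v l)‖ ≤ ‖ι u - ι v‖ := by
    intro l
    induction l with
    | nil => intro u _ v _; simp
    | cons H t ih =>
      intro u hu v hv
      calc ‖ι (List.foldl pol (pol u H) t) - ι (List.foldl pol (pol v H) t)‖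
          ≤ ‖ι (pol u H) - ι (pol v H)‖ := ih _ (hpolS u hu H) _ (hpolS v hv H)
        _ ≤ ‖ι u - ι v‖ := hpolContr u hu v hv H
  have hsyContr : ∀ u ∈ S, ∀ v ∈ S, ‖ι (sy u) - ι (sy v)‖ ≤ ‖ι u - ι v‖ := by
    intro u hu v hv
    have ht : Filter.Tendsto (fun m => ‖ι (List.foldl pol u ((List.range m).map Hs))
        - ι (List.foldl pol v ((List.range m).map Hs))‖) Filter.atTop
        (nhds ‖ι (sy u) - ι (sy v)‖) := ((hHs u hu).sub (hHs v hv)).norm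
    exact le_of_tendsto ht (Filter.Eventually.of_forall fun m => hfoldContr _ u hu v hv)
  -- the infimum of f is a real number
  obtain ⟨c, hc⟩ := hfbdd
  set L : EReal := ⨅ w, f w with hLdef
  obtain ⟨u₀, hu₀⟩ := hfproper
  have hLtop : L ≠ ⊤ := ne_top_of_le_ne_top hu₀ (iInf_le f u₀)
  have hLbot : L ≠ ⊥ := ne_of_gt (lt_of_lt_of_le (EReal.bot_lt_coe c) (le_iInf hc))
  set ℓ : ℝ := L.toReal with hℓdef
  have hLcoe : L = (ℓ:EReal) := (EReal.coe_toReal hLtop hLbot).symm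
  clear_value L ℓ
  have hsum : L + ((σ*ρ:ℝ):EReal) = ((ℓ + σ*ρ:ℝ):EReal) := by
    rw [hLcoe, ← EReal.coe_add]
  -- pick y ∈ Y with f y < L + σρ
  obtain ⟨⟨y, hyY⟩, hylt⟩ := iInf_lt_iff.mp hYinf
  have hyS : y ∈ S := hYS hyY
  have hylt2 : f y < (⨅ w, f w) + ((σ*ρ:ℝ):EReal) := by rw [← hLdef]; exact hylt
  have hylt' : f y < ((ℓ + σ*ρ:ℝ):EReal) := by rw [← hsum]; exact hylt
  have hytop : f y ≠ ⊤ := ne_top_of_lt hylt'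
  have hybot : f y ≠ ⊥ := ne_of_gt (lt_of_lt_of_le (EReal.bot_lt_coe c) (hc y))
  set fy : ℝ := (f y).toReal with hfydef
  have hfycoe : f y = (fy:EReal) := (EReal.coe_toReal hytop hybot).symm
  have hfylt : fy < ℓ + σ*ρ := by
    rw [hfycoe] at hylt'; exact_mod_cast hylt'
  clear_value fy
  set η₀ : ℝ := min ((ℓ + σ*ρ - fy)/3) (σ*ρ/2) with hη₀def
  have hη₀ : 0 < η₀ := lt_min (by linarith) (by positivity)
  have hη₀a : 3*η₀ ≤ ℓ + σ*ρ - fy := by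
    have := min_le_left ((ℓ + σ*ρ - fy)/3) (σ*ρ/2); rw [← hη₀def] at this; linarith
  have hη₀b : η₀ ≤ σ*ρ/2 := min_le_right _ _
  clear_value η₀
  obtain ⟨us, husS, husT, hfsT⟩ := hGamma1 y hyS hytop
  constructor
  · -- part 1
    intro h₀ _
    have E1 : ∀ᶠ h in Filter.atTop, fs h (us h) < ((fy + η₀:ℝ):EReal) := by
      refine hfsT.eventually_lt_const ?_
      rw [hfycoe]; exact_mod_cast (by linarith : fy < fy + η₀)
    have E2 : ∀ᶠ h in Filter.atTop, ((ℓ - η₀:ℝ):EReal) < ⨅ w, fs h w := by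
      refine eventually_lt_of_lt_liminf (lt_of_lt_of_le ?_ hGamma2)
      rw [hLcoe]; exact_mod_cast (by linarith : ℓ - η₀ < ℓ)
    have E3 : ∀ᶠ h in Filter.atTop, dist (us h) y < η₀/(2*σ) := by
      have := husT (Metric.ball_mem_nhds y (show (0:ℝ) < η₀/(2*σ) by positivity))
      filter_upwards [this] with h hh
      exact Metric.mem_ball.mp hh
    have E4 : ∀ᶠ h in Filter.atTop, h₀ ≤ h := Filter.eventually_ge_atTop h₀
    obtain ⟨h, ⟨hE1, hE2⟩, hE3, hE4⟩ := ((E1.and E2).and (E3.and E4)).exists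
    refine ⟨h, hE4, 2, one_lt_two, us h, husS h, ?_⟩
    set ρ2 : ℝ := ((2:ℝ) - 1) * ρ / 2 with hρ2def
    have hρ2eq : ρ2 = ρ/2 := by rw [hρ2def]; ring
    have hρ2pos : 0 < ρ2 := by rw [hρ2eq]; positivity
    clear_value ρ2
    set u : X := us h with hudef
    set u' : X := T ρ2 u with hu'def
    have huS : u ∈ S := husS h
    have hu'S : u' ∈ S := hTS ρ2 hρ2pos u huS
    clear_value u u'
    obtain ⟨l, hl⟩ := hTpol ρ2 hρ2pos u huS
    have hfs_u' : fs h u' ≤ fs h u := by rw [hu'def, hl]; exact hfoldle h l u huS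
    have hfs_u'lt : fs h u' < ((fy + η₀:ℝ):EReal) := lt_of_le_of_lt hfs_u' hE1
    set δ : ℝ := ρ - η₀/σ with hδdef
    have hη₀σ : η₀/σ ≤ ρ/2 := by rw [div_le_iff₀ hσ]; linarith
    have hδpos : 0 < δ := by rw [hδdef]; linarith
    have hδlt : δ < ρ := by
      have hpos : 0 < η₀/σ := by positivity
      rw [hδdef]; linarith
    clear_value δ
    obtain ⟨ch, hch⟩ := hfsbdd h
    have hIlt : fs h u' < (⨅ w, fs h w) + ((σ*δ:ℝ):EReal) := by
      have hr : fy + η₀ ≤ (ℓ - η₀) + σ*δ := by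
        have hσδ : σ * δ = σ*ρ - η₀ := by
          rw [hδdef, mul_sub, mul_div_cancel₀ _ (ne_of_gt hσ)]
        rw [hσδ]; linarith
      calc fs h u' < ((fy + η₀:ℝ):EReal) := hfs_u'lt
        _ ≤ ((ℓ - η₀:ℝ):EReal) + ((σ*δ:ℝ):EReal) := by
            rw [← EReal.coe_add]; exact_mod_cast hr
        _ ≤ (⨅ w, fs h w) + ((σ*δ:ℝ):EReal) := add_le_add_left hE2.le _
    obtain ⟨v, hv1, hv2, hv3⟩ :=
      ekeland_ereal (fs h) (hfslsc h) ch hch σ δ hσ u' (ne_top_of_lt hfs_u'lt) hIlt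
    have hdn : ‖v - u'‖ = dist v u' := (dist_eq_norm v u').symm
    have hdρ : ‖v - u'‖ < ρ := by rw [hdn]; exact lt_trans hv2 hδlt
    refine ⟨v, ?_, ⟨?_, ?_⟩, ?_, ?_⟩
    · -- (a)
      have t1 : ‖ι v - ι u'‖ ≤ K * ‖v - u'‖ := by rw [← map_sub]; exact hιK _
      have hsyu' : sy u' = sy u := by rw [hu'def]; exact hTsy ρ2 hρ2pos u huS
      have t2 : ‖ι u' - ι (sy u)‖ < ρ2 := by
        rw [hu'def]; exact hTapprox ρ2 hρ2pos u huS
      have t3 : ‖ι (sy u) - ι (sy v)‖ ≤ CΘ * (K * ‖v - u'‖) := by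
        have e2 : sy u = sy (Θ u') := by rw [← hsyu']; exact hsyext u'
        rw [e2, hsyext v]
        calc ‖ι (sy (Θ u')) - ι (sy (Θ v))‖ ≤ ‖ι (Θ u') - ι (Θ v)‖ :=
              hsyContr _ (hΘS u') _ (hΘS v)
          _ ≤ CΘ * ‖ι u' - ι v‖ := hΘlip u' v
          _ ≤ CΘ * (K * ‖v - u'‖) := by
              have : ‖ι u' - ι v‖ ≤ K * ‖u' - v‖ := by rw [← map_sub]; exact hιK _
              rw [norm_sub_rev u' v] at this
              exact mul_le_mul_of_nonneg_left this hCΘ.le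
      have tri : ‖ι v - ι (sy v)‖ ≤ ‖ι v - ι u'‖ + ‖ι u' - ι (sy u)‖ + ‖ι (sy u) - ι (sy v)‖ := by
        calc ‖ι v - ι (sy v)‖
            = ‖(ι v - ι u') + ((ι u' - ι (sy u)) + (ι (sy u) - ι (sy v)))‖ := by congr 1; abel
          _ ≤ ‖ι v - ι u'‖ + ‖(ι u' - ι (sy u)) + (ι (sy u) - ι (sy v))‖ := norm_add_le _ _
          _ ≤ ‖ι v - ι u'‖ + (‖ι u' - ι (sy u)‖ + ‖ι (sy u) - ι (sy v)‖) := by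
              have := norm_add_le (ι u' - ι (sy u)) (ι (sy u) - ι (sy v))
              linarith
          _ = ‖ι v - ι u'‖ + ‖ι u' - ι (sy u)‖ + ‖ι (sy u) - ι (sy v)‖ := by ring
      have hρ2ρ : ρ2 < ρ := by rw [hρ2eq]; linarith
      nlinarith [mul_lt_mul_of_pos_left hdρ hK, mul_lt_mul_of_pos_left hdρ (mul_pos hCΘ hK),
        norm_nonneg (v - u')]
    · -- (b) lower
      have hsub : L - ((σ*ρ:ℝ):EReal) = ((ℓ - σ*ρ:ℝ):EReal) := by
        rw [hLcoe, ← EReal.coe_sub]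
      rw [hsub]
      calc ((ℓ - σ*ρ:ℝ):EReal) < ((ℓ - η₀:ℝ):EReal) := by exact_mod_cast (by linarith : ℓ - σ*ρ < ℓ - η₀)
        _ < ⨅ w, fs h w := hE2
        _ ≤ fs h v := iInf_le _ v
    · -- (b) upper
      rw [hsum]
      calc fs h v ≤ fs h u' := hv1
        _ < ((fy + η₀:ℝ):EReal) := hfs_u'lt
        _ ≤ ((ℓ + σ*ρ:ℝ):EReal) := by exact_mod_cast (by linarith : fy + η₀ ≤ ℓ + σ*ρ)
    · -- (c)
      have hd4 : dist v y ≤ dist v u' + dist u' u + dist u y := dist_triangle4 v u' u y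
      have hnm : dist u' u = ‖u' - u‖ := dist_eq_norm u' u
      have hfin : δ + η₀/(2*σ) < ρ := by
        have h1 : η₀/(2*σ) < η₀/σ := by
          rw [div_lt_div_iff₀ (by positivity) hσ]; nlinarith
        rw [hδdef]; linarith
      have hstep : dist v y < δ + ‖u' - u‖ + η₀/(2*σ) := by
        rw [← hnm]; linarith [hv2, hE3, hd4]
      calc Metric.infDist v Y ≤ dist v y := Metric.infDist_le_dist_of_mem hyY
        _ < δ + ‖u' - u‖ + η₀/(2*σ) := hstep
        _ ≤ ρ + ‖u' - u‖ := by linarith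
    · -- (d)
      intro w
      have := hv3 w
      rwa [dist_eq_norm] at this
  · -- part 2
    intro hfsf hYfix
    obtain ⟨v, hv1, hv2, hv3⟩ := ekeland_ereal f hflsc c hc σ ρ hσ y hytop hylt2
    have hιsyy : ι (sy y) = ι y := by
      have hfold : ∀ l : List P, List.foldl pol y l = y := by
        intro l
        induction l with
        | nil => rfl
        | cons H t ih => simp only [List.foldl_cons, hYfix y hyY H, ih]
      have htc : Filter.Tendsto (fun m : ℕ => ι (List.foldl pol y ((List.range m).map Hs)))
          Filter.atTop (nhds (ι y)) := by
        simp only [hfold]; exact tendsto_const_nhds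
      exact tendsto_nhds_unique (hHs y hyS) htc
    refine ⟨v, ?_, ⟨?_, ?_⟩, ?_, ?_⟩
    · -- (a)
      have t1 : ‖ι v - ι y‖ ≤ K * ‖v - y‖ := by rw [← map_sub]; exact hιK _
      have t3 : ‖ι y - ι (sy v)‖ ≤ CΘ * (K * ‖v - y‖) := by
        rw [← hιsyy]
        have e2 : sy y = sy (Θ y) := hsyext y
        rw [e2, hsyext v]
        calc ‖ι (sy (Θ y)) - ι (sy (Θ v))‖ ≤ ‖ι (Θ y) - ι (Θ v)‖ :=
              hsyContr _ (hΘS y) _ (hΘS v)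
          _ ≤ CΘ * ‖ι y - ι v‖ := hΘlip y v
          _ ≤ CΘ * (K * ‖v - y‖) := by
              have : ‖ι y - ι v‖ ≤ K * ‖y - v‖ := by rw [← map_sub]; exact hιK _
              rw [norm_sub_rev y v] at this
              exact mul_le_mul_of_nonneg_left this hCΘ.le
      have tri : ‖ι v - ι (sy v)‖ ≤ ‖ι v - ι y‖ + ‖ι y - ι (sy v)‖ := by
        calc ‖ι v - ι (sy v)‖ = ‖(ι v - ι y) + (ι y - ι (sy v))‖ := by congr 1; abel
          _ ≤ ‖ι v - ι y‖ + ‖ι y - ι (sy v)‖ := norm_add_le _ _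
      have hdρ : ‖v - y‖ < ρ := by rw [dist_eq_norm] at hv2; exact hv2
      nlinarith [mul_lt_mul_of_pos_left hdρ hK, mul_lt_mul_of_pos_left hdρ (mul_pos hCΘ hK),
        norm_nonneg (v - y)]
    · -- (b) lower
      have hsub : L - ((σ*ρ:ℝ):EReal) = ((ℓ - σ*ρ:ℝ):EReal) := by
        rw [hLcoe, ← EReal.coe_sub]
      rw [hsub]
      calc ((ℓ - σ*ρ:ℝ):EReal) < (ℓ:EReal) := by
            exact_mod_cast (by nlinarith : ℓ - σ*ρ < ℓ)
        _ = L := hLcoe.symm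
        _ ≤ f v := by rw [hLdef]; exact iInf_le f v
    · exact lt_of_le_of_lt hv1 hylt
    · exact lt_of_le_of_lt (Metric.infDist_le_dist_of_mem hyY) hv2
    · intro w
      have := hv3 w
      rwa [dist_eq_norm] at this
end

section
/- Weak-slope consequence of the symmetric Zhong principle. In the abstract symmetrization framework, let X be a Banach space and let η : [0,+∞) → [0,+∞) be nondecreasing and continuous with ∫₀^{+∞} ds/(1+η(s)) = +∞. Assume that for some ρ₀ > 0 there is a function r : [0,ρ₀) → [0,+∞) with ∫₀^{r(ρ)} ds/(1+η(s)) ≥ ρ for all ρ ∈ (0,ρ₀) and r(ρ) → 0 as ρ → 0⁺. Let f : X → ℝ ∪ {+∞} be a proper, bounded below, lower semicontinuous functional such that f(u^H) ≤ f(u) for all u ∈ S and all H ∈ ℋ*. Then for every ρ ∈ (0,ρ₀) and every u_ρ ∈ S with f(u_ρ) < inf_X f + ρ², there exists v_ρ ∈ X such that: (a) ‖v_ρ − v_ρ*‖_V < (K(C_Θ+1)+1)r(ρ); (b) (1 + η(‖v_ρ − T_{r(ρ)} u_ρ‖))·|df|(v_ρ) ≤ ρ. Moreover, for every minimizing sequence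 (u_j) ⊂ X_{ℋ*} for f, there exists a minimizing sequence (v_j) ⊂ X such that ‖v_j − v_j*‖_V → 0 and (1 + η(‖v_j − u_j‖))·|df|(v_j) → 0 as j → ∞. -/
open Filter Topology Metric Set

theorem zhong_core {X : Type*} [NormedAddCommGroup X] [NormedSpace ℝ X] [CompleteSpace X]
    (f : X → EReal) (hflsc : LowerSemicontinuous f)
    (η : ℝ → ℝ) (hηnonneg : ∀ s : ℝ, 0 ≤ s → 0 ≤ η s)
    (hηmono : MonotoneOn η (Set.Ici 0)) (hηcont : ContinuousOn η (Set.Ici 0))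
    (ρ R : ℝ) (hρ : 0 < ρ) (hR : 0 ≤ R)
    (hint : ρ ≤ ∫ s in (0:ℝ)..R, 1 / (1 + η s))
    (w : X) (m : EReal) (hm : ∀ x, m ≤ f x) (hmb : m ≠ ⊥)
    (hfw : f w < m + ((ρ ^ 2 : ℝ) : EReal)) :
    ∃ v : X, ‖v - w‖ ≤ R ∧ f v ≤ f w ∧ f v ≠ ⊤ ∧ f v ≠ ⊥ ∧
      ∀ x : X, f v ≤ f x + ((ρ / (1 + η ‖v - w‖) * ‖x - v‖ : ℝ) : EReal) := by
  have hηx : ∀ x : ℝ, 0 ≤ x → (0:ℝ) < 1 + η x := fun x hx => by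
    have := hηnonneg x hx; linarith
  set g : ℝ → ℝ := fun s => 1 / (1 + η s) with hg
  have hgcont : ContinuousOn g (Set.Ici 0) := by
    apply ContinuousOn.div continuousOn_const (continuousOn_const.add hηcont)
    intro x hx; exact ne_of_gt (hηx x hx)
  have hgint : ∀ a b : ℝ, 0 ≤ a → a ≤ b → IntervalIntegrable g MeasureTheory.volume a b := by
    intro a b ha hab
    apply (hgcont.mono ?_).intervalIntegrable
    rw [Set.uIcc_of_le hab]
    intro x hx; exact le_trans ha hx.1
  set H : ℝ → ℝ := fun t => ∫ s in (0:ℝ)..t, g s with hH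
  have Hsplit : ∀ a b : ℝ, 0 ≤ a → a ≤ b → H b = H a + ∫ s in a..b, g s := by
    intro a b ha hab
    exact (intervalIntegral.integral_add_adjacent_intervals (hgint 0 a le_rfl ha)
      (hgint a b ha hab)).symm
  have hgpos : ∀ a b : ℝ, 0 ≤ a → ∀ x ∈ Set.Icc a b, 0 ≤ g x := by
    intro a b ha x hx
    exact le_of_lt (div_pos one_pos (hηx x (le_trans ha hx.1)))
  have Hmono : ∀ a b : ℝ, 0 ≤ a → a ≤ b → H a ≤ H b := by
    intro a b ha hab
    rw [Hsplit a b ha hab]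
    have h0 : 0 ≤ ∫ s in a..b, g s := intervalIntegral.integral_nonneg hab (hgpos a b ha)
    linarith
  have Hstep : ∀ a b : ℝ, 0 ≤ a → a ≤ b → H b ≤ H a + (b - a) / (1 + η a) := by
    intro a b ha hab
    rw [Hsplit a b ha hab]
    have h1 : ∫ s in a..b, g s ≤ ∫ _ in a..b, 1 / (1 + η a) := by
      apply intervalIntegral.integral_mono_on hab (hgint a b ha hab) intervalIntegrable_const
      intro x hx
      have hx0 : (0:ℝ) ≤ x := le_trans ha hx.1
      have hmx : η a ≤ η x := hηmono ha hx0 hx.1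
      have := hηx a ha
      apply div_le_div_of_nonneg_left one_pos.le this (by linarith)
    have h2 : ∫ _ in a..b, 1 / (1 + η a) = (b - a) * (1 / (1 + η a)) := by
      simp [intervalIntegral.integral_const, smul_eq_mul]
    rw [h2] at h1
    have h3 : (b - a) * (1 / (1 + η a)) = (b - a) / (1 + η a) := by ring
    linarith [h3 ▸ h1]
  -- finiteness of m
  have hmtop : m ≠ ⊤ := by
    intro h
    rw [h] at hfw
    simp at hfw
    exact absurd (top_le_iff.1 (h ▸ hm w)) (by intro h2; rw [h2] at hfw; exact absurd hfw (by simp))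
  lift m to ℝ using ⟨hmtop, hmb⟩ with m' hmeq
  have hfne : ∀ x : X, f x ≤ f w → f x ≠ ⊤ ∧ f x ≠ ⊥ := by
    intro x hx
    constructor
    · intro h
      rw [h] at hx
      have : f w = ⊤ := top_le_iff.1 hx
      rw [this] at hfw
      norm_cast at hfw
    · intro h
      exact absurd (h ▸ hm x) (by simp)
  have hwt := hfne w le_rfl
  lift f w to ℝ using hwt with fw hfweq
  have hfw' : fw < m' + ρ ^ 2 := by norm_cast at hfw
  -- cost function
  set c : X → ℝ := fun z => ρ / (1 + η ‖z - w‖) with hc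
  have hcpos : ∀ z : X, 0 < c z := fun z => div_pos hρ (hηx _ (norm_nonneg _))
  -- existence of next iterate
  have hex : ∀ (n : ℕ) (z : X), f z ≤ (fw : EReal) → ∃ z' : X,
      f z' ≤ (fw : EReal) ∧ (f z' + ((c z * ‖z' - z‖ : ℝ) : EReal) ≤ f z) ∧
      ∀ x : X, f x + ((c z * ‖x - z‖ : ℝ) : EReal) ≤ f z →
        f z' ≤ f x + (((2:ℝ)⁻¹ ^ n : ℝ) : EReal) := by
    intro n z hz
    set Sz := {x : X | f x + ((c z * ‖x - z‖ : ℝ) : EReal) ≤ f z} with hSz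
    have hzmem : z ∈ Sz := by simp [hSz]
    have hIb : ((m' : ℝ) : EReal) ≤ sInf (f '' Sz) := by
      apply le_sInf
      rintro b ⟨x, -, rfl⟩
      exact hm x
    have hIt : sInf (f '' Sz) ≤ f z := sInf_le ⟨z, hzmem, rfl⟩
    have hInb : sInf (f '' Sz) ≠ ⊥ := fun h => by
      rw [h] at hIb; exact absurd (le_bot_iff.1 hIb) (by simp)
    have hInt : sInf (f '' Sz) ≠ ⊤ := by
      intro h
      rw [h] at hIt
      have h2 : f z = ⊤ := top_le_iff.1 hIt
      rw [h2] at hz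
      exact absurd (top_le_iff.1 hz) (by simp)
    have hIlt : sInf (f '' Sz) < sInf (f '' Sz) + (((2:ℝ)⁻¹ ^ n : ℝ) : EReal) := by
      lift sInf (f '' Sz) to ℝ using ⟨hInt, hInb⟩ with I hIeq
      norm_cast
      have : (0:ℝ) < (2:ℝ)⁻¹ ^ n := by positivity
      linarith
    obtain ⟨y', hy'mem, hy'lt⟩ := sInf_lt_iff.1 hIlt
    obtain ⟨z', hz'S, rfl⟩ := hy'mem
    have hz'z : f z' ≤ f z := by
      refine' le_trans _ hz'S
      exact le_add_of_nonneg_right (by exact_mod_cast mul_nonneg (hcpos z).le (norm_nonneg _))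
    refine ⟨z', le_trans hz'z hz, hz'S, ?_⟩
    intro x hx
    exact le_of_lt (lt_of_lt_of_le hy'lt (add_le_add_left (sInf_le (Set.mem_image_of_mem f hx)) _))
  choose gnext hg1 hg2 hg3 using hex
  -- the iteration
  let Y : ℕ → {z : X // f z ≤ (fw : EReal)} := fun n =>
    Nat.rec ⟨w, le_of_eq hfweq.symm⟩
      (fun n p => ⟨gnext n p.1 p.2, hg1 n p.1 p.2⟩) n
  set y : ℕ → X := fun n => (Y n).1 with hy
  have hyw : ∀ n, f (y n) ≤ (fw : EReal) := fun n => (Y n).2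
  have hy0 : y 0 = w := rfl
  have hA : ∀ n, f (y (n+1)) + ((c (y n) * ‖y (n+1) - y n‖ : ℝ) : EReal) ≤ f (y n) :=
    fun n => hg2 n (y n) (hyw n)
  have hB : ∀ n, ∀ x : X, f x + ((c (y n) * ‖x - y n‖ : ℝ) : EReal) ≤ f (y n) →
      f (y (n+1)) ≤ f x + (((2:ℝ)⁻¹ ^ n : ℝ) : EReal) := fun n => hg3 n (y n) (hyw n)
  -- real values
  have hyne : ∀ n, f (y n) ≠ ⊤ ∧ f (y n) ≠ ⊥ := fun n => hfne (y n) (hyw n)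
  set F : ℕ → ℝ := fun n => (f (y n)).toReal with hF
  have hFco : ∀ n, f (y n) = ((F n : ℝ) : EReal) :=
    fun n => (EReal.coe_toReal (hyne n).1 (hyne n).2).symm
  have hF0 : F 0 = fw := by
    have : f (y 0) = ((fw : ℝ) : EReal) := by rw [hy0, ← hfweq]
    rw [hF]
    simp only [this, EReal.toReal_coe]
  have hFm : ∀ n, m' ≤ F n := by
    intro n
    have := hm (y n)
    rw [hFco n] at this
    exact_mod_cast this
  have hAr : ∀ n, c (y n) * ‖y (n+1) - y n‖ ≤ F n - F (n+1) := by
    intro n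
    have := hA n
    rw [hFco n, hFco (n+1)] at this
    have h2 : ((F (n+1) : ℝ) : EReal) + ((c (y n) * ‖y (n+1) - y n‖ : ℝ) : EReal)
        = ((F (n+1) + c (y n) * ‖y (n+1) - y n‖ : ℝ) : EReal) := by norm_cast
    rw [h2] at this
    have h3 : F (n+1) + c (y n) * ‖y (n+1) - y n‖ ≤ F n := by exact_mod_cast this
    linarith
  have hFle : ∀ n, F (n+1) ≤ F n := by
    intro n
    have h1 := hAr n
    have h2 : 0 ≤ c (y n) * ‖y (n+1) - y n‖ := mul_nonneg (hcpos _).le (norm_nonneg _)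
    linarith
  have hFanti : Antitone F := antitone_nat_of_succ_le hFle
  -- H bound by induction
  have hHb : ∀ n, H ‖y n - w‖ ≤ (F 0 - F n) / ρ := by
    intro n
    induction n with
    | zero =>
      have h00 : ‖y 0 - w‖ = (0:ℝ) := by rw [hy0]; simp
      rw [h00]
      have h01 : H 0 = 0 := intervalIntegral.integral_same
      rw [h01]
      simp
    | succ n ih =>
      have htri : ‖y (n+1) - w‖ ≤ ‖y n - w‖ + ‖y (n+1) - y n‖ := by
        have := norm_add_le (y (n+1) - y n) (y n - w)
        rw [sub_add_sub_cancel] at this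
        linarith
      have h1 : H ‖y (n+1) - w‖ ≤ H (‖y n - w‖ + ‖y (n+1) - y n‖) :=
        Hmono _ _ (norm_nonneg _) htri
      have h2 : H (‖y n - w‖ + ‖y (n+1) - y n‖) ≤ H ‖y n - w‖ +
          ‖y (n+1) - y n‖ / (1 + η ‖y n - w‖) := by
        have := Hstep ‖y n - w‖ (‖y n - w‖ + ‖y (n+1) - y n‖) (norm_nonneg _)
          (le_add_of_nonneg_right (norm_nonneg _))
        simpa using this
      have h3 : c (y n) * ‖y (n+1) - y n‖ / ρ = ‖y (n+1) - y n‖ / (1 + η ‖y n - w‖) := by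
        show ρ / (1 + η ‖y n - w‖) * ‖y (n+1) - y n‖ / ρ = _
        rw [div_mul_eq_mul_div, div_div, mul_comm (1 + η ‖y n - w‖) ρ,
          mul_div_mul_left _ _ hρ.ne']
      have h4 : c (y n) * ‖y (n+1) - y n‖ / ρ ≤ (F n - F (n+1)) / ρ := by
        gcongr
        exact hAr n
      have h5 : (F 0 - F n) / ρ + (F n - F (n+1)) / ρ = (F 0 - F (n+1)) / ρ := by ring
      linarith
  have hHρ : ∀ n, H ‖y n - w‖ < ρ := by
    intro n
    have h1 : (F 0 - F n) / ρ < ρ := by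
      rw [div_lt_iff₀ hρ]
      have := hFm n
      rw [hF0]
      nlinarith [hfw']
    exact lt_of_le_of_lt (hHb n) h1
  have hyR : ∀ n, ‖y n - w‖ ≤ R := by
    intro n
    by_contra hcon
    push_neg at hcon
    have h1 : H R ≤ H ‖y n - w‖ := Hmono R _ hR hcon.le
    have h2 : ρ ≤ H R := hint
    linarith [hHρ n]
  -- Cauchy
  set cst : ℝ := ρ / (1 + η R) with hcst
  have hcstpos : 0 < cst := div_pos hρ (hηx R hR)
  have hclb : ∀ n, cst ≤ c (y n) := by
    intro n
    have h1 : η ‖y n - w‖ ≤ η R := hηmono (norm_nonneg _) hR (hyR n)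
    have h2 := hηx _ (norm_nonneg (y n - w))
    exact div_le_div_of_nonneg_left hρ.le h2 (by linarith)
  have hdlb : ∀ n, ‖y (n+1) - y n‖ ≤ (F n - F (n+1)) / cst := by
    intro n
    rw [le_div_iff₀ hcstpos]
    calc ‖y (n+1) - y n‖ * cst = cst * ‖y (n+1) - y n‖ := by ring
    _ ≤ c (y n) * ‖y (n+1) - y n‖ :=
        mul_le_mul_of_nonneg_right (hclb n) (norm_nonneg _)
    _ ≤ F n - F (n+1) := hAr n
  have htel : ∀ q n : ℕ, q ≤ n → ‖y n - y q‖ ≤ (F q - F n) / cst := by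
    intro q n hqn
    induction n, hqn using Nat.le_induction with
    | base => simp
    | succ n hqn ih =>
      have htri : ‖y (n+1) - y q‖ ≤ ‖y (n+1) - y n‖ + ‖y n - y q‖ := by
        have := norm_add_le (y (n+1) - y n) (y n - y q)
        rw [sub_add_sub_cancel] at this
        linarith
      have := hdlb n
      have h5 : (F n - F (n+1)) / cst + (F q - F n) / cst = (F q - F (n+1)) / cst := by ring
      linarith
  -- limit of F
  have hFbdd : BddBelow (Set.range F) := ⟨m', by rintro x ⟨n, rfl⟩; exact hFm n⟩
  have hFlim : Tendsto F atTop (nhds (⨅ n, F n)) := tendsto_atTop_ciInf hFanti hFbdd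
  set L : ℝ := ⨅ n, F n with hL
  have hLF : ∀ n, L ≤ F n := fun n => ciInf_le hFbdd n
  have hcauchy : CauchySeq y := by
    apply cauchySeq_of_le_tendsto_0 (fun q => (F q - L) / cst)
    · intro n q N hn hq
      rcases le_total q n with h | h
      · rw [dist_eq_norm]
        have h1 := htel q n h
        have h2 : F n ≥ L := hLF n
        have h3 : F q ≤ F N := hFanti hq
        calc ‖y n - y q‖ ≤ (F q - F n) / cst := h1
        _ ≤ (F N - L) / cst := by gcongr
      · rw [dist_eq_norm, norm_sub_rev]
        have h1 := htel n q h
        have h2 : F q ≥ L := hLF q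
        have h3 : F n ≤ F N := hFanti hn
        calc ‖y q - y n‖ ≤ (F n - F q) / cst := h1
        _ ≤ (F N - L) / cst := by gcongr
    · have := (hFlim.sub_const L).div_const cst
      simpa using this
  obtain ⟨v, hv⟩ := cauchySeq_tendsto_of_complete hcauchy
  -- limit facts
  have hnv : Tendsto (fun n => ‖y n - w‖) atTop (nhds ‖v - w‖) := ((hv.sub_const w).norm)
  have hvR : ‖v - w‖ ≤ R := le_of_tendsto hnv (Filter.Eventually.of_forall hyR)
  have hfvL : f v ≤ ((L : ℝ) : EReal) := by
    by_contra hcon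
    push_neg at hcon
    obtain ⟨b, hb1, hb2⟩ := EReal.exists_between_coe_real hcon
    have hb1' : L < b := by exact_mod_cast hb1
    have hev1 : ∀ᶠ z in nhds v, (b : EReal) < f z := hflsc v (b : EReal) hb2
    have hev2 : ∀ᶠ n in atTop, (b : EReal) < f (y n) := hv.eventually hev1
    have hev3 : ∀ᶠ n in atTop, F n < b := hFlim.eventually_lt_const hb1'
    obtain ⟨n, h1, h2⟩ := (hev2.and hev3).exists
    rw [hFco n] at h1
    have : b < F n := by exact_mod_cast h1
    linarith
  have hvt : f v ≠ ⊤ := fun h => by rw [h] at hfvL; exact absurd (top_le_iff.1 hfvL) (by simp)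
  have hvb : f v ≠ ⊥ := fun h => absurd (h ▸ hm v) (by simp)
  have hLfw : L ≤ fw := by rw [← hF0]; exact hLF 0
  have hfvw : f v ≤ (fw : EReal) := le_trans hfvL (by exact_mod_cast hLfw)
  refine ⟨v, hvR, hfweq ▸ hfvw, hvt, hvb, ?_⟩
  -- final Ekeland inequality
  intro x
  by_contra hcon
  push_neg at hcon
  -- f x is finite
  have hxt : f x ≠ ⊤ := by
    intro h
    rw [h] at hcon
    rw [EReal.top_add_of_ne_bot (EReal.coe_ne_bot _)] at hcon
    exact not_top_lt (lt_of_lt_of_le hcon hfvL)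
  have hxb : f x ≠ ⊥ := fun h => absurd (h ▸ hm x) (by simp)
  lift f x to ℝ using ⟨hxt, hxb⟩ with G hGeq
  lift f v to ℝ using ⟨hvt, hvb⟩ with Vv hVeq
  have hVL : Vv ≤ L := by exact_mod_cast hfvL
  have hcon' : G + ρ / (1 + η ‖v - w‖) * ‖x - v‖ < Vv := by
    have : ((G : ℝ) : EReal) + ((ρ / (1 + η ‖v - w‖) * ‖x - v‖ : ℝ) : EReal)
        = ((G + ρ / (1 + η ‖v - w‖) * ‖x - v‖ : ℝ) : EReal) := by norm_cast
    rw [this] at hcon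
    exact_mod_cast hcon
  -- convergence of costs
  have hccont : Tendsto (fun n => c (y n)) atTop (nhds (ρ / (1 + η ‖v - w‖))) := by
    have h1 : Tendsto (fun n => ‖y n - w‖) atTop (nhdsWithin ‖v - w‖ (Set.Ici 0)) := by
      apply tendsto_nhdsWithin_of_tendsto_nhds_of_eventually_within _ hnv
      exact Filter.Eventually.of_forall (fun n => norm_nonneg _)
    have h2 : Tendsto (fun n => η ‖y n - w‖) atTop (nhds (η ‖v - w‖)) :=
      (hηcont _ (norm_nonneg (v - w))).tendsto.comp h1
    have h3 : Tendsto (fun n => 1 + η ‖y n - w‖) atTop (nhds (1 + η ‖v - w‖)) :=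
      tendsto_const_nhds.add h2
    exact tendsto_const_nhds.div h3 (ne_of_gt (hηx _ (norm_nonneg (v - w))))
  have hxc : Tendsto (fun n => G + c (y n) * ‖x - y n‖) atTop
      (nhds (G + ρ / (1 + η ‖v - w‖) * ‖x - v‖)) := by
    apply tendsto_const_nhds.add
    exact hccont.mul ((tendsto_const_nhds.sub hv).norm)
  have hev : ∀ᶠ n in atTop, G + c (y n) * ‖x - y n‖ < Vv := hxc.eventually_lt_const hcon'
  have hev2 : ∀ᶠ n in atTop, F (n+1) ≤ G + (2:ℝ)⁻¹ ^ n := by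
    filter_upwards [hev] with n hn
    have hmem : f x + ((c (y n) * ‖x - y n‖ : ℝ) : EReal) ≤ f (y n) := by
      rw [← hGeq, hFco n]
      have h6 : ((G : ℝ) : EReal) + ((c (y n) * ‖x - y n‖ : ℝ) : EReal)
          = ((G + c (y n) * ‖x - y n‖ : ℝ) : EReal) := by norm_cast
      rw [h6]
      have : G + c (y n) * ‖x - y n‖ ≤ F n := le_trans hn.le (le_trans hVL (hLF n))
      exact_mod_cast this
    have := hB n x hmem
    rw [← hGeq, hFco (n+1)] at this
    have h7 : ((G : ℝ) : EReal) + (((2:ℝ)⁻¹ ^ n : ℝ) : EReal)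
        = ((G + (2:ℝ)⁻¹ ^ n : ℝ) : EReal) := by norm_cast
    rw [h7] at this
    exact_mod_cast this
  have hLG : L ≤ G := by
    have h1 : Tendsto (fun n => F (n+1)) atTop (nhds L) := hFlim.comp (tendsto_add_atTop_nat 1)
    have h2 : Tendsto (fun n => G + (2:ℝ)⁻¹ ^ n) atTop (nhds G) := by
      have h3 : Tendsto (fun n : ℕ => (2:ℝ)⁻¹ ^ n) atTop (nhds 0) :=
        tendsto_pow_atTop_nhds_zero_of_lt_one (by norm_num) (by norm_num)
      simpa using tendsto_const_nhds.add h3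
    exact le_of_tendsto_of_tendsto h1 h2 hev2
  have hcv : 0 ≤ ρ / (1 + η ‖v - w‖) * ‖x - v‖ :=
    mul_nonneg (div_pos hρ (hηx _ (norm_nonneg _))).le (norm_nonneg _)
  linarith


noncomputable def weakSlope {X : Type*} [NormedAddCommGroup X] [NormedSpace ℝ X]
    (f : X → EReal) (u : X) : EReal :=
  sSup {σ : EReal | ∃ s : ℝ, 0 ≤ s ∧ σ = (s : EReal) ∧ ∃ δ : ℝ, 0 < δ ∧
    ∃ D : (X × ℝ) × ℝ → X,
      ContinuousOn D ((Metric.ball ((u, (f u).toReal)) δ ∩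
          {p : X × ℝ | f p.1 ≤ (p.2 : EReal)}) ×ˢ Set.Icc 0 δ) ∧
      ∀ p ∈ Metric.ball ((u, (f u).toReal)) δ ∩ {p : X × ℝ | f p.1 ≤ (p.2 : EReal)},
        ∀ t ∈ Set.Icc (0:ℝ) δ,
          ‖D (p, t) - p.1‖ ≤ t ∧ f (D (p, t)) ≤ f p.1 - ((s * t : ℝ) : EReal)}

theorem weakSlope_nonneg {X : Type*} [NormedAddCommGroup X] [NormedSpace ℝ X]
    (f : X → EReal) (v : X) : (0 : EReal) ≤ weakSlope f v := by
  apply le_sSup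
  refine ⟨0, le_rfl, by norm_cast, 1, one_pos, fun q => q.1.1, ?_, ?_⟩
  · exact (continuous_fst.comp continuous_fst).continuousOn
  · intro p hp t ht
    constructor
    · simpa using ht.1
    · simp

theorem weakSlope_le_of_ekeland {X : Type*} [NormedAddCommGroup X] [NormedSpace ℝ X]
    (f : X → EReal) (v : X) (hvt : f v ≠ ⊤) (hvb : f v ≠ ⊥) (c : ℝ) (hc : 0 ≤ c)
    (hek : ∀ x : X, f v ≤ f x + ((c * ‖x - v‖ : ℝ) : EReal)) :
    weakSlope f v ≤ (c : EReal) := by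
  apply sSup_le
  rintro σ ⟨s, hs, rfl, δ, hδ, D, -, hD⟩
  have hfv : f v = (((f v).toReal : ℝ) : EReal) := (EReal.coe_toReal hvt hvb).symm
  set Vv := (f v).toReal with hVv
  have hmem : ((v, Vv) : X × ℝ) ∈ Metric.ball ((v, (f v).toReal)) δ ∩
      {p : X × ℝ | f p.1 ≤ (p.2 : EReal)} := by
    constructor
    · exact Metric.mem_ball_self hδ
    · simp only [Set.mem_setOf_eq]
      exact le_of_eq hfv
  obtain ⟨h1, h2⟩ := hD _ hmem δ ⟨hδ.le, le_rfl⟩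
  set z := D ((v, Vv), δ) with hz
  -- z has finite value
  have hzb : f z ≠ ⊥ := by
    intro h
    have := hek z
    rw [h] at this
    simp only [EReal.bot_add] at this
    rw [hfv] at this
    exact (EReal.coe_ne_bot _) (le_bot_iff.1 this)
  have hzt : f z ≠ ⊤ := by
    intro h
    rw [h] at h2
    rw [hfv] at h2
    have : ((Vv : ℝ) : EReal) - ((s * δ : ℝ) : EReal) = ((Vv - s * δ : ℝ) : EReal) := by
      norm_cast
    rw [this] at h2
    exact (EReal.coe_ne_top _) (top_le_iff.1 h2)
  lift f z to ℝ using ⟨hzt, hzb⟩ with E hEeq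
  -- real inequalities
  have r1 : Vv ≤ E + c * ‖z - v‖ := by
    have h := hek z
    rw [hfv] at h
    rw [show f z = ((E : ℝ) : EReal) from hEeq.symm] at h
    exact_mod_cast h
  have r2 : E ≤ Vv - s * δ := by
    rw [hfv] at h2
    have h3 : ((Vv : ℝ) : EReal) - ((s * δ : ℝ) : EReal) = ((Vv - s * δ : ℝ) : EReal) := by
      norm_cast
    rw [h3] at h2
    exact_mod_cast h2
  have r3 : c * ‖z - v‖ ≤ c * δ := mul_le_mul_of_nonneg_left h1 hc
  have r4 : s * δ ≤ c * δ := by linarith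
  norm_cast
  exact le_of_mul_le_mul_right r4 hδ


theorem weak_slope_consequence_of_symmetric_zhong
    {X : Type*} [NormedAddCommGroup X] [NormedSpace ℝ X] [CompleteSpace X]
    {V : Type*} [NormedAddCommGroup V] [NormedSpace ℝ V] [CompleteSpace V]
    {W : Type*} [NormedAddCommGroup W] [NormedSpace ℝ W] [CompleteSpace W]
    (ι : X →L[ℝ] V) (κ : V →L[ℝ] W)
    (K : ℝ) (hK : 0 < K) (hιK : ∀ u : X, ‖ι u‖ ≤ K * ‖u‖)
    (S : Set X)
    {P : Type*} [TopologicalSpace P] [PathConnectedSpace P]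
    (pol : X → P → X) (sy : X → X)
    (hpolS : ∀ u ∈ S, ∀ H : P, pol u H ∈ S)
    (hsyS : ∀ u : X, sy u ∈ S)
    (hpolCont : ContinuousOn (fun q : X × P => pol q.1 q.2) (S ×ˢ Set.univ))
    (hsypol : ∀ u ∈ S, ∀ H : P,
      pol (sy u) H = sy u ∧ sy (pol u H) = sy u ∧ pol (pol u H) H = pol u H)
    (happrox : ∃ Hs : ℕ → P, ∀ u ∈ S,
      Filter.Tendsto (fun m => ι (List.foldl pol u ((List.range m).map Hs)))
        Filter.atTop (nhds (ι (sy u))))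
    (hpolContr : ∀ u ∈ S, ∀ v ∈ S, ∀ H : P, ‖ι (pol u H) - ι (pol v H)‖ ≤ ‖ι u - ι v‖)
    (Θ : X → X) (CΘ : ℝ) (hCΘ : 0 < CΘ)
    (hΘS : ∀ u : X, Θ u ∈ S) (hΘid : ∀ u ∈ S, Θ u = u)
    (hΘlip : ∀ u v : X, ‖ι (Θ u) - ι (Θ v)‖ ≤ CΘ * ‖ι u - ι v‖)
    (hpolext : ∀ u : X, ∀ H : P, pol u H = pol (Θ u) H)
    (hsyext : ∀ u : X, sy u = sy (Θ u))
    (T : ℝ → X → X)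
    (hTS : ∀ ρ > (0:ℝ), ∀ u ∈ S, T ρ u ∈ S)
    (hTpol : ∀ ρ > (0:ℝ), ∀ u ∈ S, ∃ l : List P, T ρ u = List.foldl pol u l)
    (hTsy : ∀ ρ > (0:ℝ), ∀ u ∈ S, sy (T ρ u) = sy u)
    (hTapprox : ∀ ρ > (0:ℝ), ∀ u ∈ S, ‖ι (T ρ u) - ι (sy u)‖ < ρ)
    (η : ℝ → ℝ) (hηnonneg : ∀ s : ℝ, 0 ≤ s → 0 ≤ η s)
    (hηmono : MonotoneOn η (Set.Ici 0)) (hηcont : ContinuousOn η (Set.Ici 0))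
    (hηdiv : Filter.Tendsto (fun R : ℝ => ∫ s in (0:ℝ)..R, 1 / (1 + η s))
      Filter.atTop Filter.atTop)
    (ρ₀ : ℝ) (hρ₀ : 0 < ρ₀) (r : ℝ → ℝ) (hrnonneg : ∀ ρ ∈ Set.Ico (0:ℝ) ρ₀, 0 ≤ r ρ)
    (hrint : ∀ ρ ∈ Set.Ioo (0:ℝ) ρ₀, ρ ≤ ∫ s in (0:ℝ)..(r ρ), 1 / (1 + η s))
    (hrlim : Filter.Tendsto r (nhdsWithin 0 (Set.Ioi 0)) (nhds 0))
    (f : X → EReal)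
    (hfproper : ∃ u, f u ≠ ⊤)
    (hfbdd : ∃ c : ℝ, ∀ u, (c : EReal) ≤ f u)
    (hflsc : LowerSemicontinuous f)
    (hfpol : ∀ u ∈ S, ∀ H : P, f (pol u H) ≤ f u)
 :
    (∀ ρ ∈ Set.Ioo (0:ℝ) ρ₀, ∀ u ∈ S,
      f u < (⨅ w, f w) + ((ρ ^ 2 : ℝ) : EReal) →
      ∃ v : X,
        ‖ι v - ι (sy v)‖ < (K * (CΘ + 1) + 1) * r ρ ∧
        ((1 + η ‖v - T (r ρ) u‖ : ℝ) : EReal) * weakSlope f v ≤ (ρ : EReal)) ∧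
    (∀ us : ℕ → X, (∀ j, us j ∈ S ∧ ∀ H : P, pol (us j) H = us j) →
      Filter.Tendsto (fun j => f (us j)) Filter.atTop (nhds (⨅ w, f w)) →
      ∃ vs : ℕ → X,
        Filter.Tendsto (fun j => f (vs j)) Filter.atTop (nhds (⨅ w, f w)) ∧
        Filter.Tendsto (fun j => ‖ι (vs j) - ι (sy (vs j))‖) Filter.atTop (nhds 0) ∧
        Filter.Tendsto (fun j => ((1 + η ‖vs j - us j‖ : ℝ) : EReal) * weakSlope f (vs j))
          Filter.atTop (nhds (0 : EReal))) := by
  classical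
  obtain ⟨Hs, hHs⟩ := happrox
  obtain ⟨c0, hc0⟩ := hfbdd
  set m : EReal := ⨅ w, f w with hmdef
  have hm : ∀ x, m ≤ f x := fun x => iInf_le f x
  have hmb : m ≠ ⊥ := by
    intro h
    have h1 : (c0 : EReal) ≤ m := le_iInf hc0
    rw [h] at h1
    exact (EReal.coe_ne_bot c0) (le_bot_iff.1 h1)
  have η1 : ∀ t : ℝ, 0 ≤ t → (0:ℝ) < 1 + η t := fun t ht => by
    have := hηnonneg t ht; linarith
  -- sy is a contraction on S (in V-norm)
  have hsyContr : ∀ a ∈ S, ∀ b ∈ S, ‖ι (sy a) - ι (sy b)‖ ≤ ‖ι a - ι b‖ := by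
    intro a ha b hb
    have key : ∀ l : List P, ∀ a' ∈ S, ∀ b' ∈ S,
        List.foldl pol a' l ∈ S ∧ List.foldl pol b' l ∈ S ∧
        ‖ι (List.foldl pol a' l) - ι (List.foldl pol b' l)‖ ≤ ‖ι a' - ι b'‖ := by
      intro l
      induction l with
      | nil => intro a' ha' b' hb'; exact ⟨ha', hb', le_rfl⟩
      | cons H l ih =>
        intro a' ha' b' hb'
        simp only [List.foldl_cons]
        obtain ⟨h1, h2, h3⟩ := ih (pol a' H) (hpolS a' ha' H) (pol b' H) (hpolS b' hb' H)
        exact ⟨h1, h2, le_trans h3 (hpolContr a' ha' b' hb' H)⟩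
    have hlim : Filter.Tendsto (fun mm => ‖ι (List.foldl pol a ((List.range mm).map Hs))
        - ι (List.foldl pol b ((List.range mm).map Hs))‖) Filter.atTop
        (nhds ‖ι (sy a) - ι (sy b)‖) := ((hHs a ha).sub (hHs b hb)).norm
    exact le_of_tendsto hlim (Filter.Eventually.of_forall fun mm =>
      (key ((List.range mm).map Hs) a ha b hb).2.2)
  -- iterated polarizations decrease f and stay in S
  have hfoldl : ∀ l : List P, ∀ a ∈ S,
      List.foldl pol a l ∈ S ∧ f (List.foldl pol a l) ≤ f a := by
    intro l
    induction l with
    | nil => intro a ha; exact ⟨ha, le_rfl⟩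
    | cons H l ih =>
      intro a ha
      simp only [List.foldl_cons]
      obtain ⟨h1, h2⟩ := ih (pol a H) (hpolS a ha H)
      exact ⟨h1, le_trans h2 (hfpol a ha H)⟩
  have hfoldfix : ∀ l : List P, ∀ a : X, (∀ H : P, pol a H = a) →
      List.foldl pol a l = a := by
    intro l
    induction l with
    | nil => intro a _; rfl
    | cons H l ih => intro a ha; simp only [List.foldl_cons, ha H]; exact ih a ha
  have hrpos : ∀ ρ ∈ Set.Ioo (0:ℝ) ρ₀, 0 < r ρ := by
    intro ρ hρ
    rcases (hrnonneg ρ ⟨hρ.1.le, hρ.2⟩).lt_or_eq with h | h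
    · exact h
    · exfalso
      have h2 := hrint ρ hρ
      rw [← h, intervalIntegral.integral_same] at h2
      linarith [hρ.1]
  -- the main construction
  have main : ∀ ρ ∈ Set.Ioo (0:ℝ) ρ₀, ∀ u ∈ S,
      f u < m + ((ρ ^ 2 : ℝ) : EReal) →
      ∃ v : X, ‖v - T (r ρ) u‖ ≤ r ρ ∧ f v ≤ f u ∧
        ‖ι v - ι (sy v)‖ < (K * (CΘ + 1) + 1) * r ρ ∧
        ((1 + η ‖v - T (r ρ) u‖ : ℝ) : EReal) * weakSlope f v ≤ (ρ : EReal) := by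
    intro ρ hρ u hu hfu
    have hR := hrpos ρ hρ
    set w : X := T (r ρ) u with hw
    have hwS : w ∈ S := hTS (r ρ) hR u hu
    obtain ⟨l, hl⟩ := hTpol (r ρ) hR u hu
    have hfw_le : f w ≤ f u := by rw [hw, hl]; exact (hfoldl l u hu).2
    have hfw : f w < m + ((ρ ^ 2 : ℝ) : EReal) := lt_of_le_of_lt hfw_le hfu
    obtain ⟨v, hv1, hv2, hvt, hvb, hv3⟩ := zhong_core f hflsc η hηnonneg hηmono hηcont
      ρ (r ρ) hρ.1 hR.le (hrint ρ hρ) w m hm hmb hfw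
    refine ⟨v, hv1, le_trans hv2 hfw_le, ?_, ?_⟩
    · have t1 : ‖ι v - ι w‖ ≤ K * r ρ := by
        have e : ι v - ι w = ι (v - w) := (map_sub ι v w).symm
        rw [e]
        calc ‖ι (v - w)‖ ≤ K * ‖v - w‖ := hιK _
        _ ≤ K * r ρ := mul_le_mul_of_nonneg_left hv1 hK.le
      have t2 : ‖ι w - ι (sy w)‖ < r ρ := by
        rw [hw, hTsy (r ρ) hR u hu]
        exact hTapprox (r ρ) hR u hu
      have t3 : ‖ι (sy w) - ι (sy v)‖ ≤ CΘ * (K * r ρ) := by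
        rw [hsyext v, norm_sub_rev]
        calc ‖ι (sy (Θ v)) - ι (sy w)‖ ≤ ‖ι (Θ v) - ι w‖ :=
              hsyContr (Θ v) (hΘS v) w hwS
        _ = ‖ι (Θ v) - ι (Θ w)‖ := by rw [hΘid w hwS]
        _ ≤ CΘ * ‖ι v - ι w‖ := hΘlip v w
        _ ≤ CΘ * (K * r ρ) := mul_le_mul_of_nonneg_left t1 hCΘ.le
      have tri := dist_triangle4 (ι v) (ι w) (ι (sy w)) (ι (sy v))
      rw [dist_eq_norm, dist_eq_norm, dist_eq_norm, dist_eq_norm] at tri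
      calc ‖ι v - ι (sy v)‖
          ≤ ‖ι v - ι w‖ + ‖ι w - ι (sy w)‖ + ‖ι (sy w) - ι (sy v)‖ := tri
      _ < K * r ρ + r ρ + CΘ * (K * r ρ) := by linarith
      _ = (K * (CΘ + 1) + 1) * r ρ := by ring
    · have h1p : (0:ℝ) < 1 + η ‖v - w‖ := η1 _ (norm_nonneg _)
      have hcv : (0:ℝ) ≤ ρ / (1 + η ‖v - w‖) := (div_pos hρ.1 h1p).le
      have hslope : weakSlope f v ≤ ((ρ / (1 + η ‖v - w‖) : ℝ) : EReal) :=
        weakSlope_le_of_ekeland f v hvt hvb _ hcv hv3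
      calc ((1 + η ‖v - w‖ : ℝ) : EReal) * weakSlope f v
          ≤ ((1 + η ‖v - w‖ : ℝ) : EReal) * ((ρ / (1 + η ‖v - w‖) : ℝ) : EReal) :=
            mul_le_mul_of_nonneg_left hslope (by exact_mod_cast h1p.le)
      _ = (((1 + η ‖v - w‖) * (ρ / (1 + η ‖v - w‖)) : ℝ) : EReal) := by norm_cast
      _ = (ρ : EReal) := by
            have : (1 + η ‖v - w‖) * (ρ / (1 + η ‖v - w‖)) = ρ := by
              field_simp
            rw [this]
  constructor
  · intro ρ hρ u hu hfu
    obtain ⟨v, _, _, h3, h4⟩ := main ρ hρ u hu hfu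
    exact ⟨v, h3, h4⟩
  · intro us hus hmin
    have hmt : m ≠ ⊤ := by
      obtain ⟨u0, hu0⟩ := hfproper
      intro h
      exact hu0 (top_le_iff.1 (h ▸ hm u0))
    set m' : ℝ := m.toReal with hm'def
    have hmeq : m = ((m' : ℝ) : EReal) := (EReal.coe_toReal hmt hmb).symm
    have hTfix : ∀ ρ' > (0:ℝ), ∀ j, T ρ' (us j) = us j := by
      intro ρ' hρ' j
      obtain ⟨l, hl⟩ := hTpol ρ' hρ' (us j) (hus j).1
      rw [hl]
      exact hfoldfix l (us j) (hus j).2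
    set ε : ℕ → ℝ := fun j => (f (us j)).toReal - m' with hε
    have hεlim : Filter.Tendsto ε Filter.atTop (nhds 0) := by
      have h1 : Filter.Tendsto (fun j => (f (us j)).toReal) Filter.atTop (nhds m') :=
        (EReal.tendsto_toReal hmt hmb).comp hmin
      simpa using h1.sub_const m'
    set ρs : ℕ → ℝ := fun j => min (ρ₀ / 2) (Real.sqrt (ε j) + (1:ℝ) / (j + 1)) with hρs
    have hρpos : ∀ j, 0 < ρs j := by
      intro j
      apply lt_min (by linarith)
      have h1 := Real.sqrt_nonneg (ε j)
      have h2 : (0:ℝ) < 1 / ((j : ℝ) + 1) := by positivity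
      linarith
    have hρlt : ∀ j, ρs j < ρ₀ := fun j => lt_of_le_of_lt (min_le_left _ _) (by linarith)
    have hsum0 : Filter.Tendsto (fun j : ℕ => Real.sqrt (ε j) + 1 / ((j : ℝ) + 1))
        Filter.atTop (nhds 0) := by
      have h2 : Filter.Tendsto (fun j => Real.sqrt (ε j)) Filter.atTop (nhds 0) := by
        have := (Real.continuous_sqrt.tendsto 0).comp hεlim
        simpa [Function.comp_def] using this
      have h3 : Filter.Tendsto (fun j : ℕ => 1 / ((j : ℝ) + 1)) Filter.atTop (nhds 0) :=
        tendsto_one_div_add_atTop_nhds_zero_nat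
      simpa using h2.add h3
    have hρ0 : Filter.Tendsto ρs Filter.atTop (nhds 0) := by
      have h4 : Filter.Tendsto ρs Filter.atTop (nhds (min (ρ₀ / 2) 0)) :=
        tendsto_const_nhds.min hsum0
      rwa [min_eq_right (by linarith : (0:ℝ) ≤ ρ₀ / 2)] at h4
    have hgood : ∀ᶠ j in Filter.atTop, f (us j) < m + ((ρs j ^ 2 : ℝ) : EReal) := by
      have hev1 : ∀ᶠ j in Filter.atTop, f (us j) < m + ((1:ℝ) : EReal) := by
        apply hmin.eventually_lt_const
        rw [hmeq]
        norm_cast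
        linarith
      have hev2 : ∀ᶠ j in Filter.atTop, Real.sqrt (ε j) + 1 / ((j : ℝ) + 1) < ρ₀ / 2 :=
        hsum0.eventually_lt_const (by linarith)
      filter_upwards [hev1, hev2] with j h1 h2
      have hjt : f (us j) ≠ ⊤ := by
        intro h
        rw [h] at h1
        exact not_top_lt (lt_of_lt_of_le h1 le_top)
      have hjb : f (us j) ≠ ⊥ := by
        intro h
        have := hm (us j)
        rw [h] at this
        exact hmb (le_bot_iff.1 this)
      have hfj : f (us j) = (((f (us j)).toReal : ℝ) : EReal) :=
        (EReal.coe_toReal hjt hjb).symm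
      have hρsj : ρs j = Real.sqrt (ε j) + 1 / ((j : ℝ) + 1) := min_eq_right h2.le
      have hε0 : 0 ≤ ε j := by
        have h5 := hm (us j)
        rw [hmeq, hfj] at h5
        have h6 : m' ≤ (f (us j)).toReal := by exact_mod_cast h5
        have hdef : ε j = (f (us j)).toReal - m' := rfl
        linarith
      have hεlt : ε j < ρs j ^ 2 := by
        rw [hρsj]
        obtain ⟨e, hedef⟩ : ∃ e, ε j = e := ⟨_, rfl⟩
        rw [hedef] at hε0 ⊢
        have hsq := Real.sq_sqrt hε0
        have hp : (0:ℝ) < 1 / ((j : ℝ) + 1) := by positivity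
        nlinarith [hsq, mul_nonneg (Real.sqrt_nonneg e) hp.le, pow_pos hp 2]
      rw [hfj, hmeq]
      have h7 : (f (us j)).toReal < m' + ρs j ^ 2 := by
        have hdef : ε j = (f (us j)).toReal - m' := rfl
        linarith
      exact_mod_cast h7
    have hex2 : ∀ j, f (us j) < m + ((ρs j ^ 2 : ℝ) : EReal) →
        ∃ v : X, f v ≤ f (us j) ∧
          ‖ι v - ι (sy v)‖ < (K * (CΘ + 1) + 1) * r (ρs j) ∧
          ((1 + η ‖v - us j‖ : ℝ) : EReal) * weakSlope f v ≤ ((ρs j : ℝ) : EReal) := by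
      intro j hj
      have hTj : T (r (ρs j)) (us j) = us j :=
        hTfix _ (hrpos (ρs j) ⟨hρpos j, hρlt j⟩) j
      obtain ⟨v, h1, h2, h3, h4⟩ := main (ρs j) ⟨hρpos j, hρlt j⟩ (us j) (hus j).1 hj
      rw [hTj] at h4
      exact ⟨v, h2, h3, h4⟩
    set vs : ℕ → X := fun j =>
      if h : f (us j) < m + ((ρs j ^ 2 : ℝ) : EReal) then (hex2 j h).choose
      else us j with hvs
    have hspec : ∀ j, f (us j) < m + ((ρs j ^ 2 : ℝ) : EReal) →
        f (vs j) ≤ f (us j) ∧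
        ‖ι (vs j) - ι (sy (vs j))‖ < (K * (CΘ + 1) + 1) * r (ρs j) ∧
        ((1 + η ‖vs j - us j‖ : ℝ) : EReal) * weakSlope f (vs j) ≤ ((ρs j : ℝ) : EReal) := by
      intro j hj
      have hveq : vs j = (hex2 j hj).choose := by
        simp only [hvs]
        exact dif_pos hj
      rw [hveq]
      exact (hex2 j hj).choose_spec
    refine ⟨vs, ?_, ?_, ?_⟩
    · apply tendsto_of_tendsto_of_tendsto_of_le_of_le' tendsto_const_nhds hmin
      · exact Filter.Eventually.of_forall fun j => hm (vs j)
      · filter_upwards [hgood] with j hj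
        exact (hspec j hj).1
    · have hρs0 : Filter.Tendsto (fun j => r (ρs j)) Filter.atTop (nhds 0) := by
        apply hrlim.comp
        apply tendsto_nhdsWithin_of_tendsto_nhds_of_eventually_within _ hρ0
        exact Filter.Eventually.of_forall fun j => hρpos j
      apply tendsto_of_tendsto_of_tendsto_of_le_of_le' tendsto_const_nhds
        (h := fun j => (K * (CΘ + 1) + 1) * r (ρs j)) ?_ ?_ ?_
      · simpa using hρs0.const_mul (K * (CΘ + 1) + 1)
      · exact Filter.Eventually.of_forall fun j => norm_nonneg _
      · filter_upwards [hgood] with j hj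
        exact ((hspec j hj).2.1).le
    · apply tendsto_of_tendsto_of_tendsto_of_le_of_le' tendsto_const_nhds
        (h := fun j => ((ρs j : ℝ) : EReal)) ?_ ?_ ?_
      · have h8 : Filter.Tendsto (fun j => ((ρs j : ℝ) : EReal)) Filter.atTop
            (nhds (((0:ℝ) : ℝ) : EReal)) := EReal.tendsto_coe.2 hρ0
        simpa using h8
      · apply Filter.Eventually.of_forall
        intro j
        apply mul_nonneg _ (weakSlope_nonneg f (vs j))
        exact_mod_cast (η1 _ (norm_nonneg _)).le
      · filter_upwards [hgood] with j hj
        exact (hspec j hj).2.2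
end
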